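/- Let e_1, ..., e_n be i.i.d. real random variables with mean μ and variance σ², and let z = (1/n)·Σ e_i be their empirical mean. Let X be a real random variable independent of (e_1,...,e_n). Then E[X·z] = E[X·e_1] and Var(X·z) ≤ Var(X·e_1), with strict inequality when σ² > 0, n > 1, and E[X²] > 0. -/

import Mathlib

open MeasureTheory ProbabilityTheory Finset

/-- Abstract form of Proposition 2: let `e ⟨0, hn⟩, ..., e (n-1)` be i.i.d. real random variables
with mean `m` and variance `σ²`, let `z = (1/n)·Σᵢ e i` be their empirical mean, and let
`X` be a real random variable independent of the tuple `(e ⟨0, hn⟩, ..., e (n-1))`. Then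
`E[X·z] = E[X·e ⟨0, hn⟩]` and `Var(X·z) ≤ Var(X·e ⟨0, hn⟩)`, with strict inequality when
`σ² > 0`, `n > 1` and `E[X²] > 0`. -/
theorem empirical_mean_trace_update
    {Ω : Type*} [MeasurableSpace Ω] (μ : Measure Ω) [IsProbabilityMeasure μ]
    (n : ℕ) (hn : 0 < n) (e : Fin n → Ω → ℝ) (X : Ω → ℝ) (m σ2 : ℝ)
    (hmeas : ∀ i, Measurable (e i))
    (hiid_indep : iIndepFun e μ)
    (hiid_ident : ∀ i, IdentDistrib (e i) (e ⟨0, hn⟩) μ μ)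
    (hmean : ∀ i, μ[e i] = m)
    (hvar : ∀ i, variance (e i) μ = σ2)
    (hXe : IndepFun X (fun ω => (fun i => e i ω)) μ)
    (hXL2 : MemLp X 2 μ) (heL2 : ∀ i, MemLp (e i) 2 μ)
    (hXz : MemLp (fun ω => X ω * ((∑ i, e i ω) / n)) 2 μ)
    (hXe0 : MemLp (fun ω => X ω * e ⟨0, hn⟩ ω) 2 μ) :
    μ[fun ω => X ω * ((∑ i, e i ω) / n)] = μ[fun ω => X ω * e ⟨0, hn⟩ ω] ∧
    variance (fun ω => X ω * ((∑ i, e i ω) / n)) μ ≤ variance (fun ω => X ω * e ⟨0, hn⟩ ω) μ ∧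
    (0 < σ2 → 1 < n → 0 < μ[fun ω => X ω ^ 2] →
      variance (fun ω => X ω * ((∑ i, e i ω) / n)) μ < variance (fun ω => X ω * e ⟨0, hn⟩ ω) μ) := by
  classical
  set i0 : Fin n := ⟨0, hn⟩ with hi0
  set z : Ω → ℝ := fun ω => (∑ i, e i ω) / n with hz_def
  have hnR : (0 : ℝ) < n := by exact_mod_cast hn
  -- measurability / independence facts
  have hg : Measurable (fun v : Fin n → ℝ => (∑ i, v i) / n) :=
    (Finset.measurable_sum univ fun i _ => measurable_pi_apply i).div_const (n : ℝ)
  have hg0 : Measurable (fun v : Fin n → ℝ => v i0) := measurable_pi_apply i0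
  have hXz_indep : IndepFun X z μ := hXe.comp measurable_id hg
  have hXe0_indep : IndepFun X (e i0) μ := hXe.comp measurable_id hg0
  have hX2z2_indep : IndepFun (fun ω => X ω ^ 2) (fun ω => z ω ^ 2) μ :=
    hXe.comp (measurable_id.pow_const 2) (hg.pow_const 2)
  have hX2e02_indep : IndepFun (fun ω => X ω ^ 2) (fun ω => e i0 ω ^ 2) μ :=
    hXe.comp (measurable_id.pow_const 2) (hg0.pow_const 2)
  have hXm : AEStronglyMeasurable X μ := hXL2.aestronglyMeasurable
  have hX2m : AEStronglyMeasurable (fun ω => X ω ^ 2) μ := by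
    apply (hXm.mul hXm).congr
    filter_upwards with ω; simp [Pi.mul_apply, sq]
  have hzm : AEStronglyMeasurable z μ :=
    ((Finset.measurable_sum univ fun i _ => hmeas i).div_const (n : ℝ)).aestronglyMeasurable
  have hz2m : AEStronglyMeasurable (fun ω => z ω ^ 2) μ := by
    apply (hzm.mul hzm).congr
    filter_upwards with ω; simp [Pi.mul_apply, sq]
  have he0m : AEStronglyMeasurable (e i0) μ := (hmeas i0).aestronglyMeasurable
  have he02m : AEStronglyMeasurable (fun ω => e i0 ω ^ 2) μ :=
    ((hmeas i0).pow_const 2).aestronglyMeasurable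
  -- ℒ² membership of z
  have hz_eq : z = fun ω => (n : ℝ)⁻¹ * (∑ i, e i) ω := by
    funext ω
    simp [hz_def, Finset.sum_apply, div_eq_inv_mul]
  have hsumL2 : MemLp (∑ i, e i) 2 μ := memLp_finset_sum' _ (fun i _ => heL2 i)
  have hzL2 : MemLp z 2 μ := by
    rw [hz_eq]; exact hsumL2.const_mul _
  -- mean of z
  have hint : ∀ i : Fin n, Integrable (e i) μ := fun i => (heL2 i).integrable one_le_two
  have hEz : μ[z] = m := by
    have h1 : μ[z] = (∫ ω, (∑ i, e i ω) ∂μ) / n := by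
      rw [hz_def]; exact integral_div _ _
    rw [h1, integral_finset_sum _ (fun i _ => hint i)]
    simp only [hmean]
    rw [Finset.sum_const, card_univ, Fintype.card_fin, nsmul_eq_mul]
    field_simp
  -- variance of z
  have hVarz : variance z μ = σ2 / n := by
    rw [hz_eq]
    have : (fun ω => (n : ℝ)⁻¹ * (∑ i, e i) ω) = fun ω => (n : ℝ)⁻¹ * (∑ i, e i) ω := rfl
    rw [variance_const_mul]
    have hsum : variance (∑ i, e i) μ = ∑ i : Fin n, variance (e i) μ :=
      IndepFun.variance_sum (fun i _ => heL2 i)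
        (fun i _ j _ hij => hiid_indep.indepFun hij)
    rw [hsum]
    simp only [hvar]
    rw [Finset.sum_const, card_univ, Fintype.card_fin, nsmul_eq_mul]
    field_simp
  -- second moments
  have hEz2 : μ[fun ω => z ω ^ 2] = σ2 / n + m ^ 2 := by
    have := variance_eq_sub hzL2
    rw [hVarz, hEz] at this
    have hpow : μ[z ^ 2] = μ[fun ω => z ω ^ 2] := rfl
    rw [hpow] at this
    linarith
  have hEe02 : μ[fun ω => e i0 ω ^ 2] = σ2 + m ^ 2 := by
    have := variance_eq_sub (heL2 i0)
    rw [hvar, hmean] at this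
    have hpow : μ[(e i0) ^ 2] = μ[fun ω => e i0 ω ^ 2] := rfl
    rw [hpow] at this
    linarith
  -- means of products
  have hEXz : μ[fun ω => X ω * z ω] = μ[X] * m := by
    rw [hXz_indep.integral_fun_mul_eq_mul_integral hXm hzm, hEz]
  have hEXe0 : μ[fun ω => X ω * e i0 ω] = μ[X] * m := by
    rw [hXe0_indep.integral_fun_mul_eq_mul_integral hXm he0m, hmean]
  -- second moments of products
  have hEXz2 : μ[fun ω => (X ω * z ω) ^ 2]
      = μ[fun ω => X ω ^ 2] * (σ2 / n + m ^ 2) := by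
    have h1 : μ[fun ω => (X ω * z ω) ^ 2] = μ[fun ω => X ω ^ 2 * z ω ^ 2] := by
      congr 1; funext ω; ring
    rw [h1, hX2z2_indep.integral_fun_mul_eq_mul_integral hX2m hz2m, hEz2]
  have hEXe02 : μ[fun ω => (X ω * e i0 ω) ^ 2]
      = μ[fun ω => X ω ^ 2] * (σ2 + m ^ 2) := by
    have h1 : μ[fun ω => (X ω * e i0 ω) ^ 2] = μ[fun ω => X ω ^ 2 * e i0 ω ^ 2] := by
      congr 1; funext ω; ring
    rw [h1, hX2e02_indep.integral_fun_mul_eq_mul_integral hX2m he02m, hEe02]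
  -- variances of products
  have hVXz : variance (fun ω => X ω * z ω) μ
      = μ[fun ω => X ω ^ 2] * (σ2 / n + m ^ 2) - (μ[X] * m) ^ 2 := by
    have := variance_eq_sub hXz
    have hpow : μ[(fun ω => X ω * z ω) ^ 2] = μ[fun ω => (X ω * z ω) ^ 2] := rfl
    rw [hpow, hEXz2, hEXz] at this
    exact this
  have hVXe0 : variance (fun ω => X ω * e i0 ω) μ
      = μ[fun ω => X ω ^ 2] * (σ2 + m ^ 2) - (μ[X] * m) ^ 2 := by
    have := variance_eq_sub hXe0
    have hpow : μ[(fun ω => X ω * e i0 ω) ^ 2] = μ[fun ω => (X ω * e i0 ω) ^ 2] := rfl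
    rw [hpow, hEXe02, hEXe0] at this
    exact this
  -- auxiliary inequalities
  have hEX2nonneg : 0 ≤ μ[fun ω => X ω ^ 2] := integral_nonneg fun ω => sq_nonneg _
  have hσ2nonneg : 0 ≤ σ2 := by rw [← hvar i0]; exact variance_nonneg _ _
  refine ⟨by rw [hEXz, hEXe0], ?_, ?_⟩
  · rw [hVXz, hVXe0]
    have h1 : σ2 / n ≤ σ2 := by
      rw [div_le_iff₀ hnR]
      nlinarith [(Nat.one_le_cast (α := ℝ)).mpr hn]
    nlinarith
  · intro hσ2 hn1 hEX2
    rw [hVXz, hVXe0]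
    have h1 : σ2 / n < σ2 := by
      rw [div_lt_iff₀ hnR]
      nlinarith [(Nat.one_lt_cast (α := ℝ)).mpr hn1]
    nlinarith
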